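/- arXiv:1209.2932 — 2 statements merged into one kernel-verified Lean document; each statement's English description precedes it below -/
import Mathlib

section
/- Under the stated geometric assumptions, the combined configuration error vector admits the matrix representation e₁₂ = (Q^d₂₁ R₂ᵀ K₁₂ R₁ − R₁ᵀ K₁₂ R₂ Q^d₁₂)^∨, where K₁₂ = kᵅ s₁₂ s₁₂ᵀ + (kᵝ/‖s₁₂₃‖²) s₁₂₃ s₁₂₃ᵀ. -/
noncomputable section
open Matrix

/-- Vectors in ℝ³ with the Euclidean norm. -/
abbrev V3 : Type := EuclideanSpace ℝ (Fin 3)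

/-- Real 3×3 matrices. -/
abbrev M3 : Type := Matrix (Fin 3) (Fin 3) ℝ

/-- The special orthogonal group SO(3): RᵀR = I and det R = 1. -/
def SO3 (R : M3) : Prop := Rᵀ * R = 1 ∧ R.det = 1

/-- Action of a matrix on a vector. -/
def matVec (A : M3) (v : V3) : V3 := WithLp.toLp 2 (A.mulVec v)

/-- Cross product on ℝ³. -/
def cross3 (u v : V3) : V3 :=
  WithLp.toLp 2 ![u 1 * v 2 - u 2 * v 1, u 2 * v 0 - u 0 * v 2, u 0 * v 1 - u 1 * v 0]

/-- The hat map: x̂ y = x × y. -/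
def hat (x : V3) : M3 :=
  !![0, -x 2, x 1; x 2, 0, -x 0; -x 1, x 0, 0]

/-- The vee map, inverse of the hat map on skew-symmetric matrices. -/
def vee (A : M3) : V3 := WithLp.toLp 2 ![A 2 1, A 0 2, A 1 0]

/-- Dot product on ℝ³. -/
def dot3 (u v : V3) : ℝ := u 0 * v 0 + u 1 * v 1 + u 2 * v 2

attribute [local instance] Matrix.normedAddCommGroup Matrix.normedSpace

lemma SO3.mul_transpose {R : M3} (h : SO3 R) : R * Rᵀ = 1 :=
  mul_eq_one_comm.mp h.1

lemma SO3.adjugate_eq {R : M3} (h : SO3 R) : R.adjugate = Rᵀ := by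
  have h1 : R * R.adjugate = 1 := by rw [Matrix.mul_adjugate, h.2, one_smul]
  calc R.adjugate = 1 * R.adjugate := (one_mul _).symm
    _ = Rᵀ * (R * R.adjugate) := by rw [← h.1, Matrix.mul_assoc]
    _ = Rᵀ := by rw [h1, mul_one]

lemma SO3.transpose {R : M3} (h : SO3 R) : SO3 Rᵀ := by
  refine ⟨?_, ?_⟩
  · simpa using h.mul_transpose
  · rw [Matrix.det_transpose]; exact h.2

lemma cross_adj (A : M3) (u v : V3) :
    cross3 (matVec A u) (matVec A v) = matVec (A.adjugate)ᵀ (cross3 u v) := by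
  rw [Matrix.adjugate_fin_three]
  ext i
  fin_cases i <;>
    simp [cross3, matVec, Matrix.mulVec, dotProduct, Fin.sum_univ_three] <;> ring

lemma cross_so3 {R : M3} (h : SO3 R) (u v : V3) :
    cross3 (matVec R u) (matVec R v) = matVec R (cross3 u v) := by
  rw [cross_adj, h.adjugate_eq, Matrix.transpose_transpose]

lemma norm_mulVec_so3 {R : M3} (h : SO3 R) (u : V3) :
    ‖matVec R u‖ = ‖u‖ := by
  have key : ∀ i j, (Rᵀ * R) i j = (1 : M3) i j := fun i j => by rw [h.1]
  have h00 := key 0 0; have h01 := key 0 1; have h02 := key 0 2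
  have h11 := key 1 1; have h12 := key 1 2; have h22 := key 2 2
  simp [Matrix.mul_apply, Matrix.one_apply, Fin.sum_univ_three] at h00 h01 h02 h11 h12 h22
  rw [EuclideanSpace.norm_eq (matVec R u), EuclideanSpace.norm_eq u]
  congr 1
  simp [matVec, Matrix.mulVec, dotProduct, Fin.sum_univ_three, Real.norm_eq_abs, sq_abs]
  linear_combination u 0 ^ 2 * h00 + u 1 ^ 2 * h11 + u 2 ^ 2 * h22 +
    2 * u 0 * u 1 * h01 + 2 * u 0 * u 2 * h02 + 2 * u 1 * u 2 * h12

lemma vee_conj (P C : M3) (x : V3) :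
    vee (P * vecMulVec x x * Cᵀ - C * vecMulVec x x * Pᵀ)
      = cross3 (matVec C x) (matVec P x) := by
  ext i
  fin_cases i <;>
    simp [vee, cross3, matVec, Matrix.mul_apply, Matrix.sub_apply, Matrix.vecMulVec_apply,
      Matrix.mulVec, dotProduct, Matrix.transpose_apply, Fin.sum_univ_three] <;> ring

lemma vee_combo (A B : M3) (a b : ℝ) :
    vee (a • A + b • B) = a • vee A + b • vee B := by
  ext i
  fin_cases i <;> simp [vee]

lemma vecMulVec_neg_neg (x : V3) : vecMulVec (-x : V3) (-x : V3) = vecMulVec x x := by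
  ext i j; simp [Matrix.vecMulVec_apply]

lemma matVec_neg (A : M3) (v : V3) : matVec A (-v) = -matVec A v := by
  ext i
  fin_cases i <;>
    simp [matVec, Matrix.mulVec, dotProduct, Fin.sum_univ_three, Pi.neg_apply] <;> ring

lemma matVec_smul (A : M3) (c : ℝ) (v : V3) : matVec A (c • v) = c • matVec A v := by
  ext i
  fin_cases i <;>
    simp [matVec, Matrix.mulVec, dotProduct, Fin.sum_univ_three, Pi.smul_apply,
      smul_eq_mul] <;> ring

lemma matVec_matVec (A B : M3) (v : V3) : matVec A (matVec B v) = matVec (A * B) v := by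
  simp [matVec, Matrix.mulVec_mulVec]

set_option maxHeartbeats 1000000 in
/-- matrix representation of the combined configuration error vector. -/
theorem error_vector_matrix_form
    (s₁₂ s₁₃ s₂₁ s₂₃ : V3)
    (hs₁₂ : ‖s₁₂‖ = 1) (hs₁₃ : ‖s₁₃‖ = 1) (hs₂₁ : ‖s₂₁‖ = 1) (hs₂₃ : ‖s₂₃‖ = 1)
    (hopp : s₁₂ = -s₂₁)
    (s₁₂₃ s₂₁₃ : V3) (hs₁₂₃ : s₁₂₃ = cross3 s₁₂ s₁₃) (hs₂₁₃ : s₂₁₃ = cross3 s₂₁ s₂₃)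
    (h₁ : s₁₂₃ ≠ 0) (h₂ : s₂₁₃ ≠ 0)
    (hnormal : ‖s₂₁₃‖⁻¹ • s₂₁₃ = -(‖s₁₂₃‖⁻¹ • s₁₂₃))
    (R₁ R₂ : M3) (hR₁ : SO3 R₁) (hR₂ : SO3 R₂)
    (b₁₂ b₁₃ b₂₁ b₂₃ b₁₂₃ b₂₁₃ : V3)
    (hb₁₂ : b₁₂ = matVec R₁ᵀ s₁₂) (hb₁₃ : b₁₃ = matVec R₁ᵀ s₁₃)
    (hb₂₁ : b₂₁ = matVec R₂ᵀ s₂₁) (hb₂₃ : b₂₃ = matVec R₂ᵀ s₂₃)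
    (hb₁₂₃ : b₁₂₃ = cross3 b₁₂ b₁₃) (hb₂₁₃ : b₂₁₃ = cross3 b₂₁ b₂₃)
    (a₁₂ : ℝ) (ha₁₂ : a₁₂ = ‖b₂₁₃‖ * ‖b₁₂₃‖)
    (Qd₁₂ Qd₂₁ : M3) (hQd : SO3 Qd₁₂) (hQd₂₁ : Qd₂₁ = Qd₁₂ᵀ)
    (kα kβ : ℝ) (hkα : 0 < kα) (hkβ : 0 < kβ)
    (e₁₂ : V3)
    (he₁₂ : e₁₂ = kα • cross3 (matVec Qd₂₁ b₂₁) b₁₂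
        + (kβ / a₁₂) • cross3 (matVec Qd₂₁ b₂₁₃) b₁₂₃)
    (K : M3)
    (hK : K = kα • vecMulVec s₁₂ s₁₂ + (kβ / ‖s₁₂₃‖ ^ 2) • vecMulVec s₁₂₃ s₁₂₃) :
    e₁₂ = vee (Qd₂₁ * R₂ᵀ * K * R₁ - R₁ᵀ * K * R₂ * Qd₁₂) := by
  have hr : ‖s₂₁₃‖ ≠ 0 := norm_ne_zero_iff.mpr h₂
  have ht : ‖s₁₂₃‖ ≠ 0 := norm_ne_zero_iff.mpr h₁
  set r := ‖s₂₁₃‖ with hrdef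
  set t := ‖s₁₂₃‖ with htdef
  have hS : s₂₁₃ = (-(r / t)) • s₁₂₃ := by
    calc s₂₁₃ = r • (r⁻¹ • s₂₁₃) := by
          rw [smul_smul, mul_inv_cancel₀ hr, one_smul]
      _ = r • (-(t⁻¹ • s₁₂₃)) := by rw [hnormal]
      _ = (-(r / t)) • s₁₂₃ := by
          rw [smul_neg, smul_smul, ← neg_smul, div_eq_mul_inv]
  have hB3 : b₁₂₃ = matVec R₁ᵀ s₁₂₃ := by
    rw [hb₁₂₃, hb₁₂, hb₁₃, hs₁₂₃]
    simpa [matVec] using cross_so3 hR₁.transpose s₁₂ s₁₃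
  have hB4 : b₂₁₃ = matVec R₂ᵀ s₂₁₃ := by
    rw [hb₂₁₃, hb₂₁, hb₂₃, hs₂₁₃]
    simpa [matVec] using cross_so3 hR₂.transpose s₂₁ s₂₃
  have hn1 : ‖b₁₂₃‖ = t := by rw [hB3]; exact norm_mulVec_so3 hR₁.transpose _
  have hn2 : ‖b₂₁₃‖ = r := by rw [hB4]; exact norm_mulVec_so3 hR₂.transpose _
  have ha : a₁₂ = r * t := by rw [ha₁₂, hn1, hn2]
  -- decompose the matrix expression
  set P : M3 := Qd₁₂ᵀ * R₂ᵀ with hP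
  have hPt : R₂ * Qd₁₂ = Pᵀ := by
    rw [hP, Matrix.transpose_mul, Matrix.transpose_transpose, Matrix.transpose_transpose]
  have hM : Qd₂₁ * R₂ᵀ * K * R₁ - R₁ᵀ * K * R₂ * Qd₁₂
      = kα • (P * vecMulVec s₂₁ s₂₁ * (R₁ᵀ)ᵀ - R₁ᵀ * vecMulVec s₂₁ s₂₁ * Pᵀ)
        + (kβ / t ^ 2) • (P * vecMulVec s₁₂₃ s₁₂₃ * (R₁ᵀ)ᵀ - R₁ᵀ * vecMulVec s₁₂₃ s₁₂₃ * Pᵀ) := by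
    rw [hQd₂₁, hK, hopp, vecMulVec_neg_neg, Matrix.transpose_transpose]
    rw [Matrix.mul_assoc
        (R₁ᵀ * (kα • vecMulVec s₂₁ s₂₁ + (kβ / t ^ 2) • vecMulVec s₁₂₃ s₁₂₃)) R₂ Qd₁₂,
      hPt, ← hP]
    simp only [Matrix.mul_add, Matrix.add_mul, Matrix.mul_smul, Matrix.smul_mul, smul_sub]
    abel
  rw [he₁₂, hM, vee_combo, vee_conj, vee_conj]
  -- rewrite the left side
  rw [hb₂₁, hb₁₂, hB4, hB3, hS, ha, hopp, hQd₂₁]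
  simp only [matVec_smul, matVec_matVec, matVec_neg, ← hP]
  set u := matVec P s₂₁
  set v := matVec R₁ᵀ s₂₁
  set w := matVec P s₁₂₃
  set z := matVec R₁ᵀ s₁₂₃
  ext i
  fin_cases i <;>
  · simp only [cross3, Pi.add_apply, Pi.smul_apply, Pi.neg_apply, smul_eq_mul,
      PiLp.add_apply, PiLp.smul_apply, PiLp.neg_apply, PiLp.toLp_apply, Fin.zero_eta, Fin.mk_one,
      Fin.reduceFinMk, Matrix.cons_val, Matrix.cons_val_zero, Matrix.cons_val_one, Matrix.head_cons, Matrix.cons_val_two,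
      Matrix.tail_cons]
    field_simp
    ring
end
end

section
/- Along trajectories of the attitude kinematics, if ‖Ω^d₁(t)‖ ≤ B^d for all t, then the time derivative of the error vector satisfies ‖ė₁₂(t)‖ ≤ (kᵅ + kᵝ)(‖e_{Ω₁}(t)‖ + ‖e_{Ω₂}(t)‖) + B^d ‖e₁₂(t)‖, where e_{Ωᵢ}(t) = Ωᵢ(t) − Ω^dᵢ(t). -/
noncomputable section
open Matrix

attribute [local instance] Matrix.normedAddCommGroup Matrix.normedSpace

/- ### Auxiliary lemmas -/

section Aux

lemma c30 (u v : V3) : cross3 u v 0 = u 1 * v 2 - u 2 * v 1 := rfl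
lemma c31 (u v : V3) : cross3 u v 1 = u 2 * v 0 - u 0 * v 2 := rfl
lemma c32 (u v : V3) : cross3 u v 2 = u 0 * v 1 - u 1 * v 0 := rfl
lemma add_app (u v : V3) (i : Fin 3) : (u + v) i = u i + v i := rfl
lemma smul_app (c : ℝ) (u : V3) (i : Fin 3) : (c • u) i = c * u i := rfl
lemma sub_app (u v : V3) (i : Fin 3) : (u - v) i = u i - v i := rfl

lemma mv_apply (A : M3) (v : V3) (i : Fin 3) :
    matVec A v i = A i 0 * v 0 + A i 1 * v 1 + A i 2 * v 2 := by
  simp [matVec, Matrix.mulVec, dotProduct, Fin.sum_univ_three]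

lemma norm_sq_V3 (x : V3) : ‖x‖^2 = x 0^2 + x 1^2 + x 2^2 := by
  rw [EuclideanSpace.norm_eq, Real.sq_sqrt (by positivity)]
  simp [Fin.sum_univ_three, sq_abs]

lemma entry_orth {A : M3} (h : Aᵀ * A = 1) (j k : Fin 3) :
    A 0 j * A 0 k + A 1 j * A 1 k + A 2 j * A 2 k = if j = k then 1 else 0 := by
  have := congrFun (congrFun h j) k
  simpa [Matrix.mul_apply, Fin.sum_univ_three, Matrix.transpose_apply, Matrix.one_apply,
    mul_comm] using this

lemma dot3_matVec {A : M3} (h : Aᵀ * A = 1) (u v : V3) :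
    dot3 (matVec A u) (matVec A v) = dot3 u v := by
  have h00 := entry_orth h 0 0; have h01 := entry_orth h 0 1; have h02 := entry_orth h 0 2
  have h10 := entry_orth h 1 0; have h11 := entry_orth h 1 1; have h12 := entry_orth h 1 2
  have h20 := entry_orth h 2 0; have h21 := entry_orth h 2 1; have h22 := entry_orth h 2 2
  simp only [if_true, if_neg, Fin.reduceEq, reduceIte] at *
  simp only [dot3, mv_apply]
  linear_combination (u 0 * v 0) * h00 + (u 0 * v 1) * h01 + (u 0 * v 2) * h02
    + (u 1 * v 0) * h10 + (u 1 * v 1) * h11 + (u 1 * v 2) * h12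
    + (u 2 * v 0) * h20 + (u 2 * v 1) * h21 + (u 2 * v 2) * h22

lemma norm_sq_dot (x : V3) : ‖x‖^2 = dot3 x x := by rw [norm_sq_V3]; simp [dot3]; ring

lemma norm_matVec {A : M3} (h : Aᵀ * A = 1) (x : V3) : ‖matVec A x‖ = ‖x‖ := by
  rw [← Real.sqrt_sq (norm_nonneg (matVec A x)), ← Real.sqrt_sq (norm_nonneg x),
    norm_sq_dot, norm_sq_dot, dot3_matVec h]

lemma lagrange (u v : V3) : ‖cross3 u v‖^2 = ‖u‖^2 * ‖v‖^2 - (dot3 u v)^2 := by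
  rw [norm_sq_V3, norm_sq_V3, norm_sq_V3, c30, c31, c32]; simp only [dot3]; ring

lemma norm_cross_le (u v : V3) : ‖cross3 u v‖ ≤ ‖u‖ * ‖v‖ := by
  have h := lagrange u v
  nlinarith [norm_nonneg (cross3 u v), norm_nonneg u, norm_nonneg v, sq_nonneg (dot3 u v),
    mul_nonneg (norm_nonneg u) (norm_nonneg v)]

lemma norm_cross_matVec {A : M3} (h : Aᵀ * A = 1) (u v : V3) :
    ‖cross3 (matVec A u) (matVec A v)‖ = ‖cross3 u v‖ := by
  rw [← Real.sqrt_sq (norm_nonneg (cross3 (matVec A u) (matVec A v))),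
    ← Real.sqrt_sq (norm_nonneg (cross3 u v)), lagrange, lagrange,
    norm_matVec h, norm_matVec h, dot3_matVec h]

lemma orth_T {A : M3} (h : Aᵀ * A = 1) : (Aᵀ)ᵀ * Aᵀ = 1 := by
  rw [Matrix.transpose_transpose]; exact mul_eq_one_comm.mp h

def L3 : V3 ≃L[ℝ] (Fin 3 → ℝ) := PiLp.continuousLinearEquiv 2 ℝ (fun _ : Fin 3 => ℝ)

lemma hasDerivAt_V3 {f : ℝ → V3} {f' : V3} {t : ℝ}
    (h : ∀ i, HasDerivAt (fun s => f s i) (f' i) t) : HasDerivAt f f' t := by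
  have h1 : HasDerivAt (⇑L3 ∘ f) (L3 f') t := hasDerivAt_pi.2 h
  have h2 := L3.symm.hasFDerivAt.comp_hasDerivAt t h1
  have e : (⇑L3.symm ∘ ⇑L3 ∘ f) = f := by funext s; simp
  rw [e] at h2; exact h2

lemma hasDerivAt_V3_comp {f : ℝ → V3} {f' : V3} {t : ℝ} (h : HasDerivAt f f' t) (i : Fin 3) :
    HasDerivAt (fun s => f s i) (f' i) t :=
  hasDerivAt_pi.1 (L3.hasFDerivAt.comp_hasDerivAt t h) i

lemma hasDerivAt_M3 {f : ℝ → M3} {f' : M3} {t : ℝ}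
    (h : ∀ i j, HasDerivAt (fun s => f s i j) (f' i j) t) : HasDerivAt f f' t :=
  hasDerivAt_pi.2 fun i => hasDerivAt_pi.2 (h i)

lemma hasDerivAt_M3_comp {f : ℝ → M3} {f' : M3} {t : ℝ} (h : HasDerivAt f f' t) (i j : Fin 3) :
    HasDerivAt (fun s => f s i j) (f' i j) t := hasDerivAt_pi.1 (hasDerivAt_pi.1 h i) j

lemma hasDerivAt_transpose {M : ℝ → M3} {M' : M3} {t : ℝ} (h : HasDerivAt M M' t) :
    HasDerivAt (fun s => (M s)ᵀ) M'ᵀ t :=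
  hasDerivAt_M3 fun i j => hasDerivAt_M3_comp h j i

lemma hasDerivAt_matVec {M : ℝ → M3} {M' : M3} {f : ℝ → V3} {f' : V3} {t : ℝ}
    (hM : HasDerivAt M M' t) (hf : HasDerivAt f f' t) :
    HasDerivAt (fun s => matVec (M s) (f s)) (matVec M' (f t) + matVec (M t) f') t := by
  apply hasDerivAt_V3; intro i
  have h := ((hasDerivAt_M3_comp hM i 0).mul (hasDerivAt_V3_comp hf 0)).add
    (((hasDerivAt_M3_comp hM i 1).mul (hasDerivAt_V3_comp hf 1)).add
      ((hasDerivAt_M3_comp hM i 2).mul (hasDerivAt_V3_comp hf 2)))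
  have e1 : (fun s => M s i 0 * f s 0 + (M s i 1 * f s 1 + M s i 2 * f s 2))
      = fun s => matVec (M s) (f s) i := by funext s; rw [mv_apply]; ring
  have e2 : M' i 0 * f t 0 + M t i 0 * f' 0 + (M' i 1 * f t 1 + M t i 1 * f' 1
      + (M' i 2 * f t 2 + M t i 2 * f' 2)) = (matVec M' (f t) + matVec (M t) f') i := by
    rw [add_app, mv_apply, mv_apply]; ring
  rw [← e1, ← e2]; exact h

lemma hasDerivAt_matVec_const {M : ℝ → M3} {M' : M3} {t : ℝ} (v : V3)
    (hM : HasDerivAt M M' t) :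
    HasDerivAt (fun s => matVec (M s) v) (matVec M' v) t := by
  have h := hasDerivAt_matVec hM (hasDerivAt_const t v)
  simpa [matVec, Matrix.mulVec_zero] using h

lemma hasDerivAt_cross3 {f g : ℝ → V3} {f' g' : V3} {t : ℝ}
    (hf : HasDerivAt f f' t) (hg : HasDerivAt g g' t) :
    HasDerivAt (fun s => cross3 (f s) (g s)) (cross3 f' (g t) + cross3 (f t) g') t := by
  apply hasDerivAt_V3; intro i
  have H : ∀ a b : Fin 3, HasDerivAt (fun s => f s a * g s b - f s b * g s a)
      (f' a * g t b + f t a * g' b - (f' b * g t a + f t b * g' a)) t := fun a b =>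
    ((hasDerivAt_V3_comp hf a).mul (hasDerivAt_V3_comp hg b)).sub
      ((hasDerivAt_V3_comp hf b).mul (hasDerivAt_V3_comp hg a))
  fin_cases i
  · have h := H 1 2
    have e : f' 1 * g t 2 + f t 1 * g' 2 - (f' 2 * g t 1 + f t 2 * g' 1)
        = (cross3 f' (g t) + cross3 (f t) g') 0 := by rw [add_app, c30, c30]; ring
    rw [e] at h; exact h
  · have h := H 2 0
    have e : f' 2 * g t 0 + f t 2 * g' 0 - (f' 0 * g t 2 + f t 0 * g' 2)
        = (cross3 f' (g t) + cross3 (f t) g') 1 := by rw [add_app, c31, c31]; ring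
    rw [e] at h; exact h
  · have h := H 0 1
    have e : f' 0 * g t 1 + f t 0 * g' 1 - (f' 1 * g t 0 + f t 1 * g' 0)
        = (cross3 f' (g t) + cross3 (f t) g') 2 := by rw [add_app, c32, c32]; ring
    rw [e] at h; exact h

lemma hatT (x : V3) : (hat x)ᵀ = -(hat x) := by
  ext i j; fin_cases i <;> fin_cases j <;> simp [hat]

lemma transpose_hat_comb (Q : M3) (a b : V3) :
    (Q * hat a - hat b * Q)ᵀ = Qᵀ * hat b - hat a * Qᵀ := by
  simp only [Matrix.transpose_sub, Matrix.transpose_mul, hatT]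
  noncomm_ring

lemma transpose_Rhat (R : M3) (x : V3) : (R * hat x)ᵀ = -(hat x) * Rᵀ := by
  simp only [Matrix.transpose_mul, hatT, neg_mul]

lemma mv_neg_hat (P : M3) (x y : V3) :
    matVec (-(hat x) * P) y = cross3 (matVec P y) x := by
  ext i; fin_cases i <;>
    simp [mv_apply, Matrix.mul_apply, Matrix.neg_apply, Matrix.vecMul, dotProduct,
      Fin.sum_univ_three, hat, c30, c31, c32] <;> ring

lemma E1lem (P : M3) (a b y z : V3) :
    matVec (P * hat b - hat a * P) y + matVec P (cross3 y z)
      = cross3 (matVec P y) a + matVec P (cross3 y (z - b)) := by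
  ext i; fin_cases i <;>
    simp [mv_apply, Matrix.mul_apply, Matrix.sub_apply, Matrix.vecMul, dotProduct,
      Fin.sum_univ_three, hat, c30, c31, c32, add_app, sub_app] <;> ring

lemma crossDer (a b c : V3) :
    cross3 (cross3 a c) b + cross3 a (cross3 b c) = cross3 (cross3 a b) c := by
  ext i; fin_cases i <;> simp [c30, c31, c32, add_app] <;> ring

end Aux
set_option maxHeartbeats 2000000 in
/-- bound on the time derivative of the error vector e₁₂. -/
theorem error_vector_derivative_bound
    (s₁₂ s₁₃ s₂₁ s₂₃ : V3)
    (hs₁₂ : ‖s₁₂‖ = 1) (hs₁₃ : ‖s₁₃‖ = 1) (hs₂₁ : ‖s₂₁‖ = 1) (hs₂₃ : ‖s₂₃‖ = 1)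
    (hopp : s₁₂ = -s₂₁)
    (s₁₂₃ s₂₁₃ : V3) (hs₁₂₃ : s₁₂₃ = cross3 s₁₂ s₁₃) (hs₂₁₃ : s₂₁₃ = cross3 s₂₁ s₂₃)
    (h₁ : s₁₂₃ ≠ 0) (h₂ : s₂₁₃ ≠ 0)
    (hnormal : ‖s₂₁₃‖⁻¹ • s₂₁₃ = -(‖s₁₂₃‖⁻¹ • s₁₂₃))
    (Ω₁ Ω₂ Ωd₁ Ωd₂ : ℝ → V3)
    (hΩ₁ : Continuous Ω₁) (hΩ₂ : Continuous Ω₂)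
    (hΩd₁ : Continuous Ωd₁) (hΩd₂ : Continuous Ωd₂)
    (R₁ R₂ Qd₁₂ : ℝ → M3)
    (hR₁SO : ∀ t, SO3 (R₁ t)) (hR₂SO : ∀ t, SO3 (R₂ t)) (hQdSO : ∀ t, SO3 (Qd₁₂ t))
    (hR₁ : ∀ t, HasDerivAt R₁ (R₁ t * hat (Ω₁ t)) t)
    (hR₂ : ∀ t, HasDerivAt R₂ (R₂ t * hat (Ω₂ t)) t)
    (hQd : ∀ t, HasDerivAt Qd₁₂ (Qd₁₂ t * hat (Ωd₁ t) - hat (Ωd₂ t) * Qd₁₂ t) t)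
    (Qd₂₁ : ℝ → M3) (hQd₂₁ : ∀ t, Qd₂₁ t = (Qd₁₂ t)ᵀ)
    (b₁₂ b₁₃ b₂₁ b₂₃ b₁₂₃ b₂₁₃ : ℝ → V3)
    (hb₁₂ : ∀ t, b₁₂ t = matVec (R₁ t)ᵀ s₁₂) (hb₁₃ : ∀ t, b₁₃ t = matVec (R₁ t)ᵀ s₁₃)
    (hb₂₁ : ∀ t, b₂₁ t = matVec (R₂ t)ᵀ s₂₁) (hb₂₃ : ∀ t, b₂₃ t = matVec (R₂ t)ᵀ s₂₃)
    (hb₁₂₃ : ∀ t, b₁₂₃ t = cross3 (b₁₂ t) (b₁₃ t))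
    (hb₂₁₃ : ∀ t, b₂₁₃ t = cross3 (b₂₁ t) (b₂₃ t))
    (a₁₂ : ℝ → ℝ) (ha₁₂ : ∀ t, a₁₂ t = ‖b₂₁₃ t‖ * ‖b₁₂₃ t‖)
    (kα kβ : ℝ) (hkα : 0 < kα) (hkβ : 0 < kβ)
    (e₁₂ : ℝ → V3)
    (he₁₂ : ∀ t, e₁₂ t = kα • cross3 (matVec (Qd₂₁ t) (b₂₁ t)) (b₁₂ t)
        + (kβ / a₁₂ t) • cross3 (matVec (Qd₂₁ t) (b₂₁₃ t)) (b₁₂₃ t))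
    (Bd : ℝ) (hBd : ∀ t, ‖Ωd₁ t‖ ≤ Bd) :
    ∀ t, ‖deriv e₁₂ t‖ ≤
      (kα + kβ) * (‖Ω₁ t - Ωd₁ t‖ + ‖Ω₂ t - Ωd₂ t‖) + Bd * ‖e₁₂ t‖ := by
  intro t
  have hA : (0:ℝ) < ‖s₂₁₃‖ * ‖s₁₂₃‖ :=
    mul_pos (norm_pos_iff.2 h₂) (norm_pos_iff.2 h₁)
  have oQ : ∀ s, ((Qd₁₂ s)ᵀ)ᵀ * (Qd₁₂ s)ᵀ = 1 := fun s => orth_T (hQdSO s).1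
  have nb12 : ‖b₁₂ t‖ = 1 := by rw [hb₁₂ t, norm_matVec (orth_T (hR₁SO t).1), hs₁₂]
  have nb21 : ‖b₂₁ t‖ = 1 := by rw [hb₂₁ t, norm_matVec (orth_T (hR₂SO t).1), hs₂₁]
  have nb123 : ∀ s, ‖b₁₂₃ s‖ = ‖s₁₂₃‖ := fun s => by
    rw [hb₁₂₃ s, hb₁₂ s, hb₁₃ s, norm_cross_matVec (orth_T (hR₁SO s).1), ← hs₁₂₃]
  have nb213 : ∀ s, ‖b₂₁₃ s‖ = ‖s₂₁₃‖ := fun s => by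
    rw [hb₂₁₃ s, hb₂₁ s, hb₂₃ s, norm_cross_matVec (orth_T (hR₂SO s).1), ← hs₂₁₃]
  have haA : ∀ s, a₁₂ s = ‖s₂₁₃‖ * ‖s₁₂₃‖ := fun s => by
    rw [ha₁₂ s, nb123 s, nb213 s]
  have hef : e₁₂ = fun s => kα • cross3 (matVec ((Qd₁₂ s)ᵀ) (b₂₁ s)) (b₁₂ s)
      + (kβ / (‖s₂₁₃‖ * ‖s₁₂₃‖)) • cross3 (matVec ((Qd₁₂ s)ᵀ) (b₂₁₃ s)) (b₁₂₃ s) :=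
    funext fun s => by rw [he₁₂ s, hQd₂₁ s, haA s]
  have he12t : e₁₂ t = kα • cross3 (matVec ((Qd₁₂ t)ᵀ) (b₂₁ t)) (b₁₂ t)
      + (kβ / (‖s₂₁₃‖ * ‖s₁₂₃‖)) • cross3 (matVec ((Qd₁₂ t)ᵀ) (b₂₁₃ t)) (b₁₂₃ t) := by
    rw [he₁₂ t, hQd₂₁ t, haA t]
  -- derivative of the transposed desired attitude
  have hQT : HasDerivAt (fun s => (Qd₁₂ s)ᵀ)
      ((Qd₁₂ t)ᵀ * hat (Ωd₂ t) - hat (Ωd₁ t) * (Qd₁₂ t)ᵀ) t := by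
    have h := hasDerivAt_transpose (hQd t)
    rwa [transpose_hat_comb] at h
  -- derivatives of the body-frame vectors
  have hbD : ∀ (R : ℝ → M3) (Ω : ℝ → V3), (∀ s, HasDerivAt R (R s * hat (Ω s)) s) →
      ∀ (vv : V3) (b : ℝ → V3), (∀ s, b s = matVec (R s)ᵀ vv) →
      HasDerivAt b (cross3 (b t) (Ω t)) t := by
    intro R Ω hR vv b hb
    have h1 := hasDerivAt_matVec_const vv (hasDerivAt_transpose (hR t))
    rw [show (fun s => matVec (R s)ᵀ vv) = b from (funext hb).symm] at h1
    have e : matVec (R t * hat (Ω t))ᵀ vv = cross3 (b t) (Ω t) := by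
      rw [transpose_Rhat, mv_neg_hat, hb t]
    rwa [e] at h1
  have hb12d := hbD R₁ Ω₁ hR₁ s₁₂ b₁₂ hb₁₂
  have hb13d := hbD R₁ Ω₁ hR₁ s₁₃ b₁₃ hb₁₃
  have hb21d := hbD R₂ Ω₂ hR₂ s₂₁ b₂₁ hb₂₁
  have hb23d := hbD R₂ Ω₂ hR₂ s₂₃ b₂₃ hb₂₃
  have hbc : ∀ (b c bc : ℝ → V3) (Ω : ℝ → V3), (∀ s, bc s = cross3 (b s) (c s)) →
      HasDerivAt b (cross3 (b t) (Ω t)) t → HasDerivAt c (cross3 (c t) (Ω t)) t →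
      HasDerivAt bc (cross3 (bc t) (Ω t)) t := by
    intro b c bc Ω hbcf hb hc
    have h1 := hasDerivAt_cross3 hb hc
    rw [show (fun s => cross3 (b s) (c s)) = bc from (funext hbcf).symm] at h1
    rwa [crossDer, ← hbcf t] at h1
  have hb123d := hbc b₁₂ b₁₃ b₁₂₃ Ω₁ hb₁₂₃ hb12d hb13d
  have hb213d := hbc b₂₁ b₂₃ b₂₁₃ Ω₂ hb₂₁₃ hb21d hb23d
  -- derivatives of the rotated vectors
  have hU := hasDerivAt_matVec hQT hb21d
  rw [E1lem] at hU
  have hV := hasDerivAt_matVec hQT hb213d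
  rw [E1lem] at hV
  have hC1 := hasDerivAt_cross3 hU hb12d
  have hC2 := hasDerivAt_cross3 hV hb123d
  have hD := (hC1.const_smul kα).add (hC2.const_smul (kβ / (‖s₂₁₃‖ * ‖s₁₂₃‖)))
  have hderiv : deriv e₁₂ t
      = kα • (cross3 (cross3 (matVec ((Qd₁₂ t)ᵀ) (b₂₁ t)) (Ωd₁ t)
            + matVec ((Qd₁₂ t)ᵀ) (cross3 (b₂₁ t) (Ω₂ t - Ωd₂ t))) (b₁₂ t)
          + cross3 (matVec ((Qd₁₂ t)ᵀ) (b₂₁ t)) (cross3 (b₁₂ t) (Ω₁ t)))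
        + (kβ / (‖s₂₁₃‖ * ‖s₁₂₃‖)) • (cross3 (cross3 (matVec ((Qd₁₂ t)ᵀ) (b₂₁₃ t)) (Ωd₁ t)
            + matVec ((Qd₁₂ t)ᵀ) (cross3 (b₂₁₃ t) (Ω₂ t - Ωd₂ t))) (b₁₂₃ t)
          + cross3 (matVec ((Qd₁₂ t)ᵀ) (b₂₁₃ t)) (cross3 (b₁₂₃ t) (Ω₁ t))) := by
    rw [hef]; exact hD.deriv
  have hkey : kα • (cross3 (cross3 (matVec ((Qd₁₂ t)ᵀ) (b₂₁ t)) (Ωd₁ t)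
            + matVec ((Qd₁₂ t)ᵀ) (cross3 (b₂₁ t) (Ω₂ t - Ωd₂ t))) (b₁₂ t)
          + cross3 (matVec ((Qd₁₂ t)ᵀ) (b₂₁ t)) (cross3 (b₁₂ t) (Ω₁ t)))
        + (kβ / (‖s₂₁₃‖ * ‖s₁₂₃‖)) • (cross3 (cross3 (matVec ((Qd₁₂ t)ᵀ) (b₂₁₃ t)) (Ωd₁ t)
            + matVec ((Qd₁₂ t)ᵀ) (cross3 (b₂₁₃ t) (Ω₂ t - Ωd₂ t))) (b₁₂₃ t)
          + cross3 (matVec ((Qd₁₂ t)ᵀ) (b₂₁₃ t)) (cross3 (b₁₂₃ t) (Ω₁ t)))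
      = cross3 (e₁₂ t) (Ωd₁ t)
        + (kα • (cross3 (matVec ((Qd₁₂ t)ᵀ) (cross3 (b₂₁ t) (Ω₂ t - Ωd₂ t))) (b₁₂ t)
            + cross3 (matVec ((Qd₁₂ t)ᵀ) (b₂₁ t)) (cross3 (b₁₂ t) (Ω₁ t - Ωd₁ t)))
          + (kβ / (‖s₂₁₃‖ * ‖s₁₂₃‖)) •
            (cross3 (matVec ((Qd₁₂ t)ᵀ) (cross3 (b₂₁₃ t) (Ω₂ t - Ωd₂ t))) (b₁₂₃ t)
            + cross3 (matVec ((Qd₁₂ t)ᵀ) (b₂₁₃ t)) (cross3 (b₁₂₃ t) (Ω₁ t - Ωd₁ t)))) := by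
    rw [he12t]
    ext i; fin_cases i <;> simp [c30, c31, c32, add_app, smul_app, sub_app] <;> ring
  rw [hderiv, hkey]
  -- norm bounds
  have nu : ‖matVec ((Qd₁₂ t)ᵀ) (b₂₁ t)‖ = 1 := by rw [norm_matVec (oQ t), nb21]
  have nv : ‖matVec ((Qd₁₂ t)ᵀ) (b₂₁₃ t)‖ = ‖s₂₁₃‖ := by rw [norm_matVec (oQ t), nb213 t]
  have nw1 : ‖matVec ((Qd₁₂ t)ᵀ) (cross3 (b₂₁ t) (Ω₂ t - Ωd₂ t))‖ ≤ ‖Ω₂ t - Ωd₂ t‖ := by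
    rw [norm_matVec (oQ t)]
    calc ‖cross3 (b₂₁ t) (Ω₂ t - Ωd₂ t)‖ ≤ ‖b₂₁ t‖ * ‖Ω₂ t - Ωd₂ t‖ := norm_cross_le _ _
    _ = ‖Ω₂ t - Ωd₂ t‖ := by rw [nb21, one_mul]
  have nw2 : ‖matVec ((Qd₁₂ t)ᵀ) (cross3 (b₂₁₃ t) (Ω₂ t - Ωd₂ t))‖
      ≤ ‖s₂₁₃‖ * ‖Ω₂ t - Ωd₂ t‖ := by
    rw [norm_matVec (oQ t)]
    have h := norm_cross_le (b₂₁₃ t) (Ω₂ t - Ωd₂ t)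
    rwa [nb213 t] at h
  have B1 : ‖cross3 (e₁₂ t) (Ωd₁ t)‖ ≤ Bd * ‖e₁₂ t‖ := by
    calc ‖cross3 (e₁₂ t) (Ωd₁ t)‖ ≤ ‖e₁₂ t‖ * ‖Ωd₁ t‖ := norm_cross_le _ _
    _ ≤ ‖e₁₂ t‖ * Bd := mul_le_mul_of_nonneg_left (hBd t) (norm_nonneg _)
    _ = Bd * ‖e₁₂ t‖ := mul_comm _ _
  have B2 : ‖cross3 (matVec ((Qd₁₂ t)ᵀ) (cross3 (b₂₁ t) (Ω₂ t - Ωd₂ t))) (b₁₂ t)‖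
      ≤ ‖Ω₂ t - Ωd₂ t‖ := by
    calc _ ≤ ‖matVec ((Qd₁₂ t)ᵀ) (cross3 (b₂₁ t) (Ω₂ t - Ωd₂ t))‖ * ‖b₁₂ t‖ :=
        norm_cross_le _ _
    _ = ‖matVec ((Qd₁₂ t)ᵀ) (cross3 (b₂₁ t) (Ω₂ t - Ωd₂ t))‖ := by rw [nb12, mul_one]
    _ ≤ ‖Ω₂ t - Ωd₂ t‖ := nw1
  have B3 : ‖cross3 (matVec ((Qd₁₂ t)ᵀ) (b₂₁ t)) (cross3 (b₁₂ t) (Ω₁ t - Ωd₁ t))‖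
      ≤ ‖Ω₁ t - Ωd₁ t‖ := by
    calc _ ≤ ‖matVec ((Qd₁₂ t)ᵀ) (b₂₁ t)‖ * ‖cross3 (b₁₂ t) (Ω₁ t - Ωd₁ t)‖ :=
        norm_cross_le _ _
    _ = ‖cross3 (b₁₂ t) (Ω₁ t - Ωd₁ t)‖ := by rw [nu, one_mul]
    _ ≤ ‖b₁₂ t‖ * ‖Ω₁ t - Ωd₁ t‖ := norm_cross_le _ _
    _ = ‖Ω₁ t - Ωd₁ t‖ := by rw [nb12, one_mul]
  have B4 : ‖cross3 (matVec ((Qd₁₂ t)ᵀ) (cross3 (b₂₁₃ t) (Ω₂ t - Ωd₂ t))) (b₁₂₃ t)‖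
      ≤ ‖s₂₁₃‖ * ‖Ω₂ t - Ωd₂ t‖ * ‖s₁₂₃‖ := by
    calc _ ≤ ‖matVec ((Qd₁₂ t)ᵀ) (cross3 (b₂₁₃ t) (Ω₂ t - Ωd₂ t))‖ * ‖b₁₂₃ t‖ :=
        norm_cross_le _ _
    _ = ‖matVec ((Qd₁₂ t)ᵀ) (cross3 (b₂₁₃ t) (Ω₂ t - Ωd₂ t))‖ * ‖s₁₂₃‖ := by rw [nb123 t]
    _ ≤ ‖s₂₁₃‖ * ‖Ω₂ t - Ωd₂ t‖ * ‖s₁₂₃‖ :=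
        mul_le_mul_of_nonneg_right nw2 (norm_nonneg _)
  have B5 : ‖cross3 (matVec ((Qd₁₂ t)ᵀ) (b₂₁₃ t)) (cross3 (b₁₂₃ t) (Ω₁ t - Ωd₁ t))‖
      ≤ ‖s₂₁₃‖ * (‖s₁₂₃‖ * ‖Ω₁ t - Ωd₁ t‖) := by
    calc _ ≤ ‖matVec ((Qd₁₂ t)ᵀ) (b₂₁₃ t)‖ * ‖cross3 (b₁₂₃ t) (Ω₁ t - Ωd₁ t)‖ :=
        norm_cross_le _ _
    _ ≤ ‖s₂₁₃‖ * (‖s₁₂₃‖ * ‖Ω₁ t - Ωd₁ t‖) := by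
        rw [nv]
        refine mul_le_mul_of_nonneg_left ?_ (norm_nonneg _)
        calc ‖cross3 (b₁₂₃ t) (Ω₁ t - Ωd₁ t)‖ ≤ ‖b₁₂₃ t‖ * ‖Ω₁ t - Ωd₁ t‖ :=
            norm_cross_le _ _
        _ = ‖s₁₂₃‖ * ‖Ω₁ t - Ωd₁ t‖ := by rw [nb123 t]
  -- assemble the final bound
  have hPn : ‖cross3 (matVec ((Qd₁₂ t)ᵀ) (cross3 (b₂₁ t) (Ω₂ t - Ωd₂ t))) (b₁₂ t)
        + cross3 (matVec ((Qd₁₂ t)ᵀ) (b₂₁ t)) (cross3 (b₁₂ t) (Ω₁ t - Ωd₁ t))‖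
      ≤ ‖Ω₂ t - Ωd₂ t‖ + ‖Ω₁ t - Ωd₁ t‖ := le_trans (norm_add_le _ _) (add_le_add B2 B3)
  have hRn : ‖cross3 (matVec ((Qd₁₂ t)ᵀ) (cross3 (b₂₁₃ t) (Ω₂ t - Ωd₂ t))) (b₁₂₃ t)
        + cross3 (matVec ((Qd₁₂ t)ᵀ) (b₂₁₃ t)) (cross3 (b₁₂₃ t) (Ω₁ t - Ωd₁ t))‖
      ≤ ‖s₂₁₃‖ * ‖Ω₂ t - Ωd₂ t‖ * ‖s₁₂₃‖ + ‖s₂₁₃‖ * (‖s₁₂₃‖ * ‖Ω₁ t - Ωd₁ t‖) :=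
    le_trans (norm_add_le _ _) (add_le_add B4 B5)
  have hknorm : ‖kα‖ = kα := abs_of_pos hkα
  have hc0 : (0:ℝ) < kβ / (‖s₂₁₃‖ * ‖s₁₂₃‖) := div_pos hkβ hA
  have hcnorm : ‖kβ / (‖s₂₁₃‖ * ‖s₁₂₃‖)‖ = kβ / (‖s₂₁₃‖ * ‖s₁₂₃‖) := abs_of_pos hc0
  refine le_trans (norm_add_le _ _) ?_
  refine le_trans (add_le_add B1 (norm_add_le _ _)) ?_
  rw [norm_smul, norm_smul, hknorm, hcnorm]
  have t1 : kα * ‖cross3 (matVec ((Qd₁₂ t)ᵀ) (cross3 (b₂₁ t) (Ω₂ t - Ωd₂ t))) (b₁₂ t)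
        + cross3 (matVec ((Qd₁₂ t)ᵀ) (b₂₁ t)) (cross3 (b₁₂ t) (Ω₁ t - Ωd₁ t))‖
      ≤ kα * (‖Ω₂ t - Ωd₂ t‖ + ‖Ω₁ t - Ωd₁ t‖) :=
    mul_le_mul_of_nonneg_left hPn (le_of_lt hkα)
  have t2 : (kβ / (‖s₂₁₃‖ * ‖s₁₂₃‖)) *
        ‖cross3 (matVec ((Qd₁₂ t)ᵀ) (cross3 (b₂₁₃ t) (Ω₂ t - Ωd₂ t))) (b₁₂₃ t)
        + cross3 (matVec ((Qd₁₂ t)ᵀ) (b₂₁₃ t)) (cross3 (b₁₂₃ t) (Ω₁ t - Ωd₁ t))‖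
      ≤ (kβ / (‖s₂₁₃‖ * ‖s₁₂₃‖)) *
        (‖s₂₁₃‖ * ‖Ω₂ t - Ωd₂ t‖ * ‖s₁₂₃‖ + ‖s₂₁₃‖ * (‖s₁₂₃‖ * ‖Ω₁ t - Ωd₁ t‖)) :=
    mul_le_mul_of_nonneg_left hRn (le_of_lt hc0)
  have t3 : (kβ / (‖s₂₁₃‖ * ‖s₁₂₃‖)) *
        (‖s₂₁₃‖ * ‖Ω₂ t - Ωd₂ t‖ * ‖s₁₂₃‖ + ‖s₂₁₃‖ * (‖s₁₂₃‖ * ‖Ω₁ t - Ωd₁ t‖))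
      = kβ * (‖Ω₂ t - Ωd₂ t‖ + ‖Ω₁ t - Ωd₁ t‖) := by
    field_simp
  rw [t3] at t2
  nlinarith [t1, t2]
end
end
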